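/- For any three functions f, g, h from the natural numbers to the closed complex unit disc and any real x ≥ 2, the pretentious distance satisfies the triangle inequality: D(f, h; x) ≤ D(f, g; x) + D(g, h; x), where D(f, g; x)² = ∑_{p ≤ x, p prime} (1 - Re(f(p) · conj(g(p))))/p. -/

import Mathlib

open Finset

/-- Cauchy–Schwarz certificate in raw coordinates. -/
lemma disc_triangle_aux (x1 y1 x2 y2 x3 y3 : ℝ)
    (hn1 : x1 ^ 2 + y1 ^ 2 ≤ 1) (hn2 : x2 ^ 2 + y2 ^ 2 ≤ 1) (hn3 : x3 ^ 2 + y3 ^ 2 ≤ 1) :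
    Real.sqrt (1 - (x1 * x3 + y1 * y3)) ≤
      Real.sqrt (1 - (x1 * x2 + y1 * y2)) + Real.sqrt (1 - (x2 * x3 + y2 * y3)) := by
  have hA0 : 0 ≤ 1 - (x1 * x2 + y1 * y2) := by
    nlinarith [sq_nonneg (x1 - x2), sq_nonneg (y1 - y2)]
  have hB0 : 0 ≤ 1 - (x2 * x3 + y2 * y3) := by
    nlinarith [sq_nonneg (x2 - x3), sq_nonneg (y2 - y3)]
  have ha10 : 0 ≤ 1 - (x1 ^ 2 + y1 ^ 2) := by linarith
  have ha20 : 0 ≤ 1 - (x2 ^ 2 + y2 ^ 2) := by linarith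
  have ha30 : 0 ≤ 1 - (x3 ^ 2 + y3 ^ 2) := by linarith
  have hs1sq : Real.sqrt (1 - (x1 ^ 2 + y1 ^ 2)) ^ 2 = 1 - (x1 ^ 2 + y1 ^ 2) :=
    Real.sq_sqrt ha10
  have hs2sq : Real.sqrt (1 - (x2 ^ 2 + y2 ^ 2)) ^ 2 = 1 - (x2 ^ 2 + y2 ^ 2) :=
    Real.sq_sqrt ha20
  have hs3sq : Real.sqrt (1 - (x3 ^ 2 + y3 ^ 2)) ^ 2 = 1 - (x3 ^ 2 + y3 ^ 2) :=
    Real.sq_sqrt ha30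
  obtain ⟨s1, hs1sq⟩ : ∃ s : ℝ, s ^ 2 = 1 - (x1 ^ 2 + y1 ^ 2) := ⟨_, hs1sq⟩
  obtain ⟨s2, hs2sq⟩ : ∃ s : ℝ, s ^ 2 = 1 - (x2 ^ 2 + y2 ^ 2) := ⟨_, hs2sq⟩
  obtain ⟨s3, hs3sq⟩ : ∃ s : ℝ, s ^ 2 = 1 - (x3 ^ 2 + y3 ^ 2) := ⟨_, hs3sq⟩
  -- Cauchy–Schwarz in ℝ⁵ with vectors v1 - v2 and v2 - v3, where
  -- v1 = (x1, y1, s1, 0, 0), v2 = (x2, y2, 0, s2, 0), v3 = (x3, y3, 0, 0, s3).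
  have key : ((1 - (x1 * x3 + y1 * y3)) - (1 - (x1 * x2 + y1 * y2))
        - (1 - (x2 * x3 + y2 * y3))) ^ 2
      ≤ (2 * (1 - (x1 * x2 + y1 * y2))) * (2 * (1 - (x2 * x3 + y2 * y3))) := by
    have cs := Finset.sum_mul_sq_le_sq_mul_sq Finset.univ
      (![x1 - x2, y1 - y2, s1, -s2, 0])
      (![x2 - x3, y2 - y3, 0, s2, -s3])
    simp only [Fin.sum_univ_five, Matrix.cons_val_zero, Matrix.cons_val_one,
      Matrix.head_cons, Matrix.cons_val_two, Matrix.tail_cons, Matrix.cons_val_three,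
      Matrix.cons_val_four] at cs
    have e1 : (x1 - x2) * (x2 - x3) + (y1 - y2) * (y2 - y3) + s1 * 0 + -s2 * s2 + 0 * -s3
        = (1 - (x1 * x3 + y1 * y3)) - (1 - (x1 * x2 + y1 * y2))
          - (1 - (x2 * x3 + y2 * y3)) := by
      linear_combination -hs2sq
    have e2 : (x1 - x2) ^ 2 + (y1 - y2) ^ 2 + s1 ^ 2 + (-s2) ^ 2 + 0 ^ 2
        = 2 * (1 - (x1 * x2 + y1 * y2)) := by
      linear_combination hs1sq + hs2sq
    have e3 : (x2 - x3) ^ 2 + (y2 - y3) ^ 2 + 0 ^ 2 + s2 ^ 2 + (-s3) ^ 2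
        = 2 * (1 - (x2 * x3 + y2 * y3)) := by
      linear_combination hs2sq + hs3sq
    rw [e1, e2, e3] at cs
    exact cs
  have h2ab : (1 - (x1 * x3 + y1 * y3)) - (1 - (x1 * x2 + y1 * y2))
      - (1 - (x2 * x3 + y2 * y3))
      ≤ 2 * (Real.sqrt (1 - (x1 * x2 + y1 * y2)) * Real.sqrt (1 - (x2 * x3 + y2 * y3))) := by
    rcases le_or_gt ((1 - (x1 * x3 + y1 * y3)) - (1 - (x1 * x2 + y1 * y2))
        - (1 - (x2 * x3 + y2 * y3))) 0 with hneg | hpos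
    · have : 0 ≤ 2 * (Real.sqrt (1 - (x1 * x2 + y1 * y2))
          * Real.sqrt (1 - (x2 * x3 + y2 * y3))) := by positivity
      linarith
    · nlinarith [key, Real.sq_sqrt hA0, Real.sq_sqrt hB0, Real.sqrt_nonneg (1 - (x1 * x2 + y1 * y2)),
        Real.sqrt_nonneg (1 - (x2 * x3 + y2 * y3)),
        mul_nonneg (Real.sqrt_nonneg (1 - (x1 * x2 + y1 * y2)))
          (Real.sqrt_nonneg (1 - (x2 * x3 + y2 * y3)))]
  have hCle : 1 - (x1 * x3 + y1 * y3)
      ≤ (Real.sqrt (1 - (x1 * x2 + y1 * y2)) + Real.sqrt (1 - (x2 * x3 + y2 * y3))) ^ 2 := by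
    have expand : (Real.sqrt (1 - (x1 * x2 + y1 * y2)) + Real.sqrt (1 - (x2 * x3 + y2 * y3))) ^ 2
        = (1 - (x1 * x2 + y1 * y2)) + (1 - (x2 * x3 + y2 * y3))
          + 2 * (Real.sqrt (1 - (x1 * x2 + y1 * y2)) * Real.sqrt (1 - (x2 * x3 + y2 * y3))) := by
      rw [add_sq, Real.sq_sqrt hA0, Real.sq_sqrt hB0]; ring
    linarith
  calc Real.sqrt (1 - (x1 * x3 + y1 * y3))
      ≤ Real.sqrt ((Real.sqrt (1 - (x1 * x2 + y1 * y2))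
          + Real.sqrt (1 - (x2 * x3 + y2 * y3))) ^ 2) := Real.sqrt_le_sqrt hCle
    _ = _ := Real.sqrt_sq (by positivity)

/-- Pointwise triangle inequality for `√(1 - Re(z·conj w))` on the closed unit disc. -/
lemma sqrt_one_sub_re_triangle (z1 z2 z3 : ℂ)
    (h1 : ‖z1‖ ≤ 1) (h2 : ‖z2‖ ≤ 1) (h3 : ‖z3‖ ≤ 1) :
    Real.sqrt (1 - (z1 * (starRingEnd ℂ) z3).re) ≤
      Real.sqrt (1 - (z1 * (starRingEnd ℂ) z2).re) +
      Real.sqrt (1 - (z2 * (starRingEnd ℂ) z3).re) := by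
  have hn : ∀ z : ℂ, ‖z‖ ≤ 1 → z.re ^ 2 + z.im ^ 2 ≤ 1 := by
    intro z hz
    have h := pow_le_one₀ (norm_nonneg z) hz (n := 2)
    have h2 := Complex.sq_norm z
    rw [Complex.normSq_apply] at h2
    nlinarith
  have hre : ∀ z w : ℂ, (z * (starRingEnd ℂ) w).re = z.re * w.re + z.im * w.im := by
    intro z w; simp [Complex.mul_re]
  rw [hre z1 z3, hre z1 z2, hre z2 z3]
  exact disc_triangle_aux z1.re z1.im z2.re z2.im z3.re z3.im
    (hn z1 h1) (hn z2 h2) (hn z3 h3)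

/-- Minkowski's inequality (ℓ² triangle inequality) over a finset. -/
lemma sqrt_sum_sq_add_le (s : Finset ℕ) (u v : ℕ → ℝ) :
    Real.sqrt (∑ i ∈ s, (u i + v i) ^ 2) ≤
      Real.sqrt (∑ i ∈ s, u i ^ 2) + Real.sqrt (∑ i ∈ s, v i ^ 2) := by
  have hu0 : 0 ≤ ∑ i ∈ s, u i ^ 2 := Finset.sum_nonneg fun i _ => sq_nonneg _
  have hv0 : 0 ≤ ∑ i ∈ s, v i ^ 2 := Finset.sum_nonneg fun i _ => sq_nonneg _
  have cs : ∑ i ∈ s, u i * v i ≤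
      Real.sqrt (∑ i ∈ s, u i ^ 2) * Real.sqrt (∑ i ∈ s, v i ^ 2) :=
    calc ∑ i ∈ s, u i * v i ≤ |∑ i ∈ s, u i * v i| := le_abs_self _
      _ = Real.sqrt ((∑ i ∈ s, u i * v i) ^ 2) := (Real.sqrt_sq_eq_abs _).symm
      _ ≤ Real.sqrt ((∑ i ∈ s, u i ^ 2) * ∑ i ∈ s, v i ^ 2) :=
          Real.sqrt_le_sqrt (Finset.sum_mul_sq_le_sq_mul_sq s u v)
      _ = Real.sqrt (∑ i ∈ s, u i ^ 2) * Real.sqrt (∑ i ∈ s, v i ^ 2) :=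
          Real.sqrt_mul hu0 _
  have expand : ∑ i ∈ s, (u i + v i) ^ 2
      = (∑ i ∈ s, u i ^ 2) + 2 * (∑ i ∈ s, u i * v i) + ∑ i ∈ s, v i ^ 2 := by
    rw [Finset.mul_sum, ← Finset.sum_add_distrib, ← Finset.sum_add_distrib]
    exact Finset.sum_congr rfl fun i _ => by ring
  calc Real.sqrt (∑ i ∈ s, (u i + v i) ^ 2)
      ≤ Real.sqrt ((Real.sqrt (∑ i ∈ s, u i ^ 2) + Real.sqrt (∑ i ∈ s, v i ^ 2)) ^ 2) := by
        apply Real.sqrt_le_sqrt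
        rw [add_sq, Real.sq_sqrt hu0, Real.sq_sqrt hv0, expand]
        linarith
    _ = _ := Real.sqrt_sq (by positivity)

/-- The Granville–Soundararajan pretentious distance `D(f, g; x)`:
the nonnegative square root of `∑_{p ≤ x, p prime} (1 - Re(f(p)·conj(g(p))))/p`. -/
noncomputable def pretentiousDist (f g : ℕ → ℂ) (x : ℝ) : ℝ :=
  Real.sqrt (∑ p ∈ (Finset.range (⌊x⌋₊ + 1)).filter Nat.Prime,
    (1 - (f p * (starRingEnd ℂ) (g p)).re) / p)

/-- The pretentious distance satisfies the triangle inequality. -/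
theorem pretentiousDist_triangle (f g h : ℕ → ℂ)
    (hf : ∀ n, ‖f n‖ ≤ 1) (hg : ∀ n, ‖g n‖ ≤ 1) (hh : ∀ n, ‖h n‖ ≤ 1)
    (x : ℝ) (hx : 2 ≤ x) :
    pretentiousDist f h x ≤ pretentiousDist f g x + pretentiousDist g h x := by
  classical
  set S := (Finset.range (⌊x⌋₊ + 1)).filter Nat.Prime with hS
  have hnum : ∀ (u v : ℕ → ℂ), (∀ n, ‖u n‖ ≤ 1) → (∀ n, ‖v n‖ ≤ 1) → ∀ p : ℕ,
      0 ≤ 1 - (u p * (starRingEnd ℂ) (v p)).re := by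
    intro u v hu hv p
    have h1 : (u p * (starRingEnd ℂ) (v p)).re ≤ ‖u p * (starRingEnd ℂ) (v p)‖ :=
      Complex.re_le_norm _
    have h2 : ‖u p * (starRingEnd ℂ) (v p)‖ ≤ 1 := by
      rw [norm_mul, RCLike.norm_conj]
      exact mul_le_one₀ (hu p) (norm_nonneg _) (hv p)
    linarith
  set u : ℕ → ℝ := fun p => Real.sqrt ((1 - (f p * (starRingEnd ℂ) (g p)).re) / p) with hu
  set v : ℕ → ℝ := fun p => Real.sqrt ((1 - (g p * (starRingEnd ℂ) (h p)).re) / p) with hv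
  have hdiv : ∀ (a b : ℕ → ℂ) (ha : ∀ n, ‖a n‖ ≤ 1) (hb : ∀ n, ‖b n‖ ≤ 1) (p : ℕ),
      0 ≤ (1 - (a p * (starRingEnd ℂ) (b p)).re) / p := fun a b ha hb p =>
    div_nonneg (hnum a b ha hb p) (Nat.cast_nonneg p)
  have husq : ∀ p, u p ^ 2 = (1 - (f p * (starRingEnd ℂ) (g p)).re) / p :=
    fun p => Real.sq_sqrt (hdiv f g hf hg p)
  have hvsq : ∀ p, v p ^ 2 = (1 - (g p * (starRingEnd ℂ) (h p)).re) / p :=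
    fun p => Real.sq_sqrt (hdiv g h hg hh p)
  have hpoint : ∀ p ∈ S, (1 - (f p * (starRingEnd ℂ) (h p)).re) / p ≤ (u p + v p) ^ 2 := by
    intro p hp
    have hsqrt : Real.sqrt ((1 - (f p * (starRingEnd ℂ) (h p)).re) / p) ≤ u p + v p := by
      rw [Real.sqrt_div (hnum f h hf hh p), hu, hv]
      simp only
      rw [Real.sqrt_div (hnum f g hf hg p), Real.sqrt_div (hnum g h hg hh p),
        ← add_div]
      gcongr
      exact sqrt_one_sub_re_triangle (f p) (g p) (h p) (hf p) (hg p) (hh p)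
    calc (1 - (f p * (starRingEnd ℂ) (h p)).re) / p
        = Real.sqrt ((1 - (f p * (starRingEnd ℂ) (h p)).re) / p) ^ 2 :=
          (Real.sq_sqrt (hdiv f h hf hh p)).symm
      _ ≤ (u p + v p) ^ 2 := by
          apply pow_le_pow_left₀ (Real.sqrt_nonneg _) hsqrt
  calc pretentiousDist f h x
      ≤ Real.sqrt (∑ p ∈ S, (u p + v p) ^ 2) := by
        unfold pretentiousDist
        exact Real.sqrt_le_sqrt (Finset.sum_le_sum hpoint)
    _ ≤ Real.sqrt (∑ p ∈ S, u p ^ 2) + Real.sqrt (∑ p ∈ S, v p ^ 2) :=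
        sqrt_sum_sq_add_le S u v
    _ = pretentiousDist f g x + pretentiousDist g h x := by
        unfold pretentiousDist
        rw [Finset.sum_congr rfl fun p _ => husq p, Finset.sum_congr rfl fun p _ => hvsq p]
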